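/- Define diagonal matrices $\mathcal{C}_n\in M_r(\mathbb{C})$ by $\mathcal{C}_0 = I$ and $\mathcal{C}_n = \sum_{i+j=n-1}\mathcal{D}(\mathcal{C}_i B \mathcal{C}_j)$, where $B=(b_{p,q})$ has nonnegative entries and $\mathcal{D}(A) = \mathrm{diag}(\sum_i a_{i,1},\dots,\sum_i a_{i,r})$. Then $\|\mathcal{C}_m\| \leq C_m\, r^m\, \|B\|^m$ where $C_m$ is the $m$-th Catalan number, and consequently the matrix power series $M(z)=\sum_{m\geq 0}\mathcal{C}_m z^{2m}$ converges in operator norm for $|z| < (4r\|B\|)^{-1/2}$ and satisfies $M(z) = I + \mathcal{D}(M(z)\,B\,M(z))\,z^2$. -/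

import Mathlib

/- We endow square matrices with the `L∞` operator norm (maximum absolute row sum). -/
attribute [local instance] Matrix.linftyOpNormedAddCommGroup Matrix.linftyOpNormedRing
  Matrix.linftyOpNormedSpace

/-- The column-sum diagonalization map
`𝒟(A) = diag(∑_i a_{i,1}, …, ∑_i a_{i,r})`. -/
def diagMap {r : ℕ} (A : Matrix (Fin r) (Fin r) ℝ) : Matrix (Fin r) (Fin r) ℝ :=
  Matrix.diagonal (fun q => ∑ i, A i q)

/-- `diagMap` as a linear map. -/
def diagMapL (r : ℕ) : Matrix (Fin r) (Fin r) ℝ →ₗ[ℝ] Matrix (Fin r) (Fin r) ℝ where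
  toFun := diagMap
  map_add' A B := by
    simp [diagMap, ← Matrix.diagonal_add, Matrix.add_apply, Finset.sum_add_distrib]
  map_smul' c A := by
    simp [diagMap, ← Matrix.diagonal_smul, Matrix.smul_apply, smul_eq_mul, Finset.mul_sum,
      Pi.smul_def]

lemma rowsum_le_norm {r : ℕ} (A : Matrix (Fin r) (Fin r) ℝ) (i : Fin r) :
    ∑ j, ‖A i j‖ ≤ ‖A‖ := by
  rw [Matrix.linfty_opNorm_def]
  have h : (∑ j, ‖A i j‖₊ : NNReal) ≤ (Finset.univ : Finset (Fin r)).sup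
      fun i => ∑ j, ‖A i j‖₊ :=
    Finset.le_sup (f := fun i => ∑ j, ‖A i j‖₊) (Finset.mem_univ i)
  calc ∑ j, ‖A i j‖ = ((∑ j, ‖A i j‖₊ : NNReal) : ℝ) := by
        simp [NNReal.coe_sum]
    _ ≤ _ := NNReal.coe_le_coe.2 h

lemma entry_le_norm {r : ℕ} (A : Matrix (Fin r) (Fin r) ℝ) (i j : Fin r) :
    ‖A i j‖ ≤ ‖A‖ :=
  le_trans (Finset.single_le_sum (f := fun j => ‖A i j‖)
    (fun _ _ => norm_nonneg _) (Finset.mem_univ j)) (rowsum_le_norm A i)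

lemma norm_diagMap_le {r : ℕ} (A : Matrix (Fin r) (Fin r) ℝ) :
    ‖diagMap A‖ ≤ r * ‖A‖ := by
  rw [diagMap, Matrix.linfty_opNorm_diagonal]
  refine (pi_norm_le_iff_of_nonneg (by positivity)).2 fun q => ?_
  calc ‖∑ i, A i q‖ ≤ ∑ i, ‖A i q‖ := norm_sum_le _ _
    _ ≤ ∑ _i : Fin r, ‖A‖ := Finset.sum_le_sum fun i _ => entry_le_norm A i q
    _ = r * ‖A‖ := by simp [Finset.sum_const, Finset.card_univ, nsmul_eq_mul]

lemma catalan_le_four_pow (m : ℕ) : catalan m ≤ 4 ^ m := by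
  have h1 : catalan m ≤ m.centralBinom := by
    rw [catalan_eq_centralBinom_div]; exact Nat.div_le_self _ _
  have h2 : m.centralBinom ≤ 2 ^ (2 * m) := by
    rw [Nat.centralBinom, ← Nat.sum_range_choose (2 * m)]
    exact Finset.single_le_sum (f := fun i => (2 * m).choose i) (fun _ _ => Nat.zero_le _)
      (Finset.mem_range.mpr (by omega))
  have h3 : 2 ^ (2 * m) = 4 ^ m := by rw [pow_mul]; norm_num
  omega

lemma catalan_succ_range (n : ℕ) :
    catalan (n + 1) = ∑ i ∈ Finset.range (n + 1), catalan i * catalan (n - i) := by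
  rw [catalan_succ', Finset.Nat.sum_antidiagonal_eq_sum_range_succ_mk]

lemma norm_one_le {r : ℕ} : ‖(1 : Matrix (Fin r) (Fin r) ℝ)‖ ≤ 1 := by
  rw [show (1 : Matrix (Fin r) (Fin r) ℝ) = Matrix.diagonal (fun _ => (1:ℝ)) by
      simp [Matrix.diagonal_one],
    Matrix.linfty_opNorm_diagonal]
  exact (pi_norm_le_iff_of_nonneg zero_le_one).2 fun _ => by simp

/-- Let `𝒞₀ = I` and `𝒞_n = ∑_{i+j=n-1} 𝒟(𝒞_i B 𝒞_j)` (the Catalan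
matrices of `B`), where `B` has nonnegative entries.  Then `‖𝒞_m‖ ≤ C_m r^m ‖B‖^m`
(`C_m` the Catalan numbers); consequently, for `|z| < (4r‖B‖)^{-1/2}` (equivalently
`z²·4r‖B‖ < 1`), the series `M(z) = ∑_m 𝒞_m z^{2m}` converges in operator norm and
satisfies `M(z) = I + 𝒟(M(z) B M(z)) z²`. -/
theorem stmt10 {r : ℕ} (B : Matrix (Fin r) (Fin r) ℝ) (hB : ∀ i j, 0 ≤ B i j)
    (C : ℕ → Matrix (Fin r) (Fin r) ℝ) (hC0 : C 0 = 1)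
    (hCrec : ∀ n, C (n + 1) = ∑ i ∈ Finset.range (n + 1), diagMap (C i * B * C (n - i)))
    (z : ℝ) (hz : z ^ 2 * (4 * r * ‖B‖) < 1) :
    (∀ m, ‖C m‖ ≤ (catalan m : ℝ) * (r : ℝ) ^ m * ‖B‖ ^ m) ∧
    Summable (fun m : ℕ => z ^ (2 * m) • C m) ∧
    (∑' m : ℕ, z ^ (2 * m) • C m) =
      1 + z ^ 2 • diagMap ((∑' m : ℕ, z ^ (2 * m) • C m) * B * (∑' m : ℕ, z ^ (2 * m) • C m)) := by
  -- Part 1: the norm bound, by strong induction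
  have hbound : ∀ m, ‖C m‖ ≤ (catalan m : ℝ) * (r : ℝ) ^ m * ‖B‖ ^ m := by
    intro m
    induction m using Nat.strong_induction_on with
    | _ m IH =>
      match m with
      | 0 =>
        rw [hC0]
        refine le_trans norm_one_le ?_
        norm_num
      | n + 1 =>
        have key : ∀ i ∈ Finset.range (n + 1),
            ‖diagMap (C i * B * C (n - i))‖ ≤
              ((catalan i : ℝ) * (catalan (n - i) : ℝ)) * ((r : ℝ) ^ (n+1) * ‖B‖ ^ (n+1)) := by
          intro i hi
          have hin : i ≤ n := Nat.lt_succ_iff.mp (Finset.mem_range.mp hi)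
          have h1 : ‖diagMap (C i * B * C (n - i))‖ ≤ r * ‖C i * B * C (n - i)‖ :=
            norm_diagMap_le _
          have h2 : ‖C i * B * C (n - i)‖ ≤ ‖C i‖ * ‖B‖ * ‖C (n - i)‖ :=
            (norm_mul_le _ _).trans
              (mul_le_mul_of_nonneg_right (norm_mul_le _ _) (norm_nonneg _))
          have hIHi := IH i (Nat.lt_succ_of_le hin)
          have hIHj := IH (n - i) (Nat.lt_succ_of_le (Nat.sub_le _ _))
          have h3 : ‖C i‖ * ‖B‖ * ‖C (n - i)‖ ≤
              ((catalan i : ℝ) * (r:ℝ)^i * ‖B‖^i) * ‖B‖ *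
                ((catalan (n-i) : ℝ) * (r:ℝ)^(n-i) * ‖B‖^(n-i)) := by
            apply mul_le_mul _ hIHj (norm_nonneg _) (by positivity)
            exact mul_le_mul_of_nonneg_right hIHi (norm_nonneg _)
          have hn : i + (n - i) = n := Nat.add_sub_cancel' hin
          have hr : (r:ℝ) ^ (n+1) = (r:ℝ)^i * (r:ℝ)^(n-i) * r := by
            rw [← pow_add, hn, pow_succ]
          have hBp : ‖B‖ ^ (n+1) = ‖B‖^i * ‖B‖^(n-i) * ‖B‖ := by
            rw [← pow_add, hn, pow_succ]
          have heq : (r:ℝ) * (((catalan i : ℝ) * (r:ℝ)^i * ‖B‖^i) * ‖B‖ *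
              ((catalan (n-i) : ℝ) * (r:ℝ)^(n-i) * ‖B‖^(n-i))) =
              ((catalan i : ℝ) * (catalan (n - i) : ℝ)) * ((r : ℝ) ^ (n+1) * ‖B‖ ^ (n+1)) := by
            rw [hr, hBp]; ring
          calc ‖diagMap (C i * B * C (n - i))‖ ≤ r * ‖C i * B * C (n - i)‖ := h1
            _ ≤ r * (‖C i‖ * ‖B‖ * ‖C (n - i)‖) :=
                mul_le_mul_of_nonneg_left h2 (by positivity)
            _ ≤ r * (((catalan i : ℝ) * (r:ℝ)^i * ‖B‖^i) * ‖B‖ *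
                ((catalan (n-i) : ℝ) * (r:ℝ)^(n-i) * ‖B‖^(n-i))) :=
                mul_le_mul_of_nonneg_left h3 (by positivity)
            _ = _ := heq
        calc ‖C (n+1)‖ ≤ ∑ i ∈ Finset.range (n + 1), ‖diagMap (C i * B * C (n - i))‖ := by
              rw [hCrec n]; exact norm_sum_le _ _
          _ ≤ ∑ i ∈ Finset.range (n + 1),
              ((catalan i : ℝ) * (catalan (n - i) : ℝ)) * ((r : ℝ) ^ (n+1) * ‖B‖ ^ (n+1)) :=
              Finset.sum_le_sum key
          _ = (catalan (n+1) : ℝ) * (r : ℝ) ^ (n+1) * ‖B‖ ^ (n+1) := by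
              rw [← Finset.sum_mul, catalan_succ_range n]
              push_cast
              ring
  -- common setup
  have hq0 : (0:ℝ) ≤ z ^ 2 * (4 * r * ‖B‖) := by positivity
  have hterm : ∀ m : ℕ, ‖z ^ (2 * m) • C m‖ ≤ (z ^ 2 * (4 * r * ‖B‖)) ^ m := by
    intro m
    have h1 : ‖z ^ (2 * m) • C m‖ = (z ^ 2) ^ m * ‖C m‖ := by
      rw [norm_smul, Real.norm_eq_abs, pow_mul, abs_pow, abs_of_nonneg (sq_nonneg z)]
    have hcat : (catalan m : ℝ) ≤ (4:ℝ) ^ m := by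
      exact_mod_cast catalan_le_four_pow m
    calc ‖z ^ (2 * m) • C m‖ = (z ^ 2) ^ m * ‖C m‖ := h1
      _ ≤ (z ^ 2) ^ m * ((catalan m : ℝ) * (r : ℝ) ^ m * ‖B‖ ^ m) :=
          mul_le_mul_of_nonneg_left (hbound m) (by positivity)
      _ ≤ (z ^ 2) ^ m * ((4:ℝ) ^ m * (r : ℝ) ^ m * ‖B‖ ^ m) :=
          by gcongr
      _ = (z ^ 2 * (4 * r * ‖B‖)) ^ m := by rw [mul_pow, mul_pow, mul_pow]
  have hnorm : Summable fun m : ℕ => ‖z ^ (2 * m) • C m‖ :=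
    Summable.of_nonneg_of_le (fun m => norm_nonneg _) hterm
      (summable_geometric_of_lt_one hq0 hz)
  have hsum : Summable fun m : ℕ => z ^ (2 * m) • C m := hnorm.of_norm
  refine ⟨hbound, hsum, ?_⟩
  -- the functional equation
  set f : ℕ → Matrix (Fin r) (Fin r) ℝ := fun m => z ^ (2 * m) • C m with hf
  set g : ℕ → Matrix (Fin r) (Fin r) ℝ := fun m => f m * B with hg
  have hgnorm : Summable fun m : ℕ => ‖g m‖ :=
    Summable.of_nonneg_of_le (fun m => norm_nonneg _) (fun m => norm_mul_le _ _)
      (hnorm.mul_right ‖B‖)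
  have h1 : (∑' m, f m) * B = ∑' m, g m := (hsum.tsum_mul_right B).symm
  have h2 : (∑' m, f m) * B * (∑' m, f m) =
      ∑' n, ∑ kl ∈ Finset.HasAntidiagonal.antidiagonal n, g kl.1 * f kl.2 := by
    rw [h1]
    exact tsum_mul_tsum_eq_tsum_sum_antidiagonal_of_summable_norm hgnorm hnorm
  have hS : Summable fun n => ∑ kl ∈ Finset.HasAntidiagonal.antidiagonal n, g kl.1 * f kl.2 :=
    (summable_norm_sum_mul_antidiagonal_of_summable_norm hgnorm hnorm).of_norm
  have hDcont : Continuous (diagMapL r) := (diagMapL r).continuous_of_finiteDimensional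
  have h3 : diagMap ((∑' m, f m) * B * (∑' m, f m)) =
      ∑' n, diagMap (∑ kl ∈ Finset.HasAntidiagonal.antidiagonal n, g kl.1 * f kl.2) := by
    rw [h2]
    exact (⟨diagMapL r, hDcont⟩ : Matrix (Fin r) (Fin r) ℝ →L[ℝ]
      Matrix (Fin r) (Fin r) ℝ).map_tsum hS
  have h4 : ∀ n : ℕ, diagMap (∑ kl ∈ Finset.HasAntidiagonal.antidiagonal n, g kl.1 * f kl.2) =
      z ^ (2 * n) • C (n + 1) := by
    intro n
    have hmap : diagMap (∑ kl ∈ Finset.HasAntidiagonal.antidiagonal n, g kl.1 * f kl.2) =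
        ∑ kl ∈ Finset.HasAntidiagonal.antidiagonal n, diagMap (g kl.1 * f kl.2) :=
      map_sum (diagMapL r) _ _
    have hterm' : ∀ kl ∈ Finset.HasAntidiagonal.antidiagonal n,
        diagMap (g kl.1 * f kl.2) = z ^ (2 * n) • diagMap (C kl.1 * B * C kl.2) := by
      intro kl hkl
      have hkln : kl.1 + kl.2 = n := Finset.HasAntidiagonal.mem_antidiagonal.mp hkl
      have : g kl.1 * f kl.2 = z ^ (2 * n) • (C kl.1 * B * C kl.2) := by
        simp only [hg, hf, smul_mul_assoc, mul_smul_comm, smul_smul]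
        rw [← pow_add, show 2 * kl.2 + 2 * kl.1 = 2 * n by omega]
      rw [this]
      exact map_smul (diagMapL r) _ _
    rw [hmap, Finset.sum_congr rfl hterm', ← Finset.smul_sum,
      Finset.Nat.sum_antidiagonal_eq_sum_range_succ_mk, ← hCrec n]
  have hsum2 : Summable fun n : ℕ => z ^ (2 * n) • C (n + 1) := by
    have hm := hS.map (diagMapL r).toAddMonoidHom hDcont
    exact hm.congr fun n => h4 n
  have h5 : z ^ 2 • diagMap ((∑' m, f m) * B * (∑' m, f m)) = ∑' n, f (n + 1) := by
    rw [h3, tsum_congr h4, ← Summable.tsum_const_smul (z ^ 2) hsum2]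
    refine tsum_congr fun n => ?_
    rw [smul_smul, hf]
    simp only
    rw [← pow_add]
    congr 2
    ring
  have h6 : (∑' m, f m) = f 0 + ∑' n, f (n + 1) := Summable.tsum_eq_zero_add hsum
  have hf0 : f 0 = 1 := by simp [hf, hC0]
  rw [h5, h6, hf0]
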